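/- Let ρ : [0,∞) → ℝ be continuously differentiable with ρ(0) = 1, and suppose there is b > 0 such that ρ(u) = 0 for all u ≥ b. Then for every λ > 0 and t > 0: ∫_0^∞ ρ(u) λ e^{2λu} erfc(u/√t + λ√t) du = (e^{−λ²t}/√(πt)) ∫_0^∞ ρ(u) e^{−u²/t} du − (1/2) erfc(λ√t) − (1/2) ∫_0^∞ ρ′(u) e^{2λu} erfc(u/√t + λ√t) du, all integrals being absolutely convergent. -/

import Mathlib

open Real MeasureTheory Set

/-- The complementary error function `erfc(x) = (2/√π) ∫_x^∞ e^{−ξ²} dξ`. -/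
noncomputable def erfc (x : ℝ) : ℝ :=
  (2 / Real.sqrt π) * ∫ ξ in Set.Ioi x, Real.exp (-ξ ^ 2)

lemma integrable_gauss : Integrable (fun ξ : ℝ => Real.exp (-ξ ^ 2)) := by
  simpa using integrable_exp_neg_mul_sq (by norm_num : (0:ℝ) < 1)

lemma hasDerivAt_erfc (x : ℝ) :
    HasDerivAt erfc (-(2 / Real.sqrt π) * Real.exp (-x ^ 2)) x := by
  have hint := integrable_gauss
  have key : ∀ y : ℝ, erfc y
      = (2 / Real.sqrt π) * ((∫ ξ, Real.exp (-ξ^2)) - (∫ ξ in Iic (0:ℝ), Real.exp (-ξ^2))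
          - ∫ ξ in (0:ℝ)..y, Real.exp (-ξ^2)) := by
    intro y
    have h1 : (∫ ξ in Iic y, Real.exp (-ξ^2)) + ∫ ξ in Ioi y, Real.exp (-ξ^2)
        = ∫ ξ, Real.exp (-ξ^2) := by
      simpa [compl_Iic] using integral_add_compl (measurableSet_Iic (a := y)) hint
    have h2 : (∫ ξ in Iic y, Real.exp (-ξ^2)) - ∫ ξ in Iic (0:ℝ), Real.exp (-ξ^2)
        = ∫ ξ in (0:ℝ)..y, Real.exp (-ξ^2) :=
      intervalIntegral.integral_Iic_sub_Iic hint.integrableOn hint.integrableOn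
    unfold erfc
    have : (∫ ξ in Ioi y, Real.exp (-ξ^2))
        = (∫ ξ, Real.exp (-ξ^2)) - (∫ ξ in Iic (0:ℝ), Real.exp (-ξ^2))
          - ∫ ξ in (0:ℝ)..y, Real.exp (-ξ^2) := by
      rw [← h2]; linarith
    rw [this]
  have hd : HasDerivAt (fun y : ℝ => ∫ ξ in (0:ℝ)..y, Real.exp (-ξ^2)) (Real.exp (-x^2)) x :=
    intervalIntegral.integral_hasDerivAt_right hint.intervalIntegrable
      hint.aestronglyMeasurable.stronglyMeasurableAtFilter
      (by fun_prop)
  have hh := ((hd.const_sub ((∫ ξ, Real.exp (-ξ^2)) - ∫ ξ in Iic (0:ℝ), Real.exp (-ξ^2))).const_mul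
      (2 / Real.sqrt π))
  have heq : erfc = fun y : ℝ => (2 / Real.sqrt π) *
      (((∫ ξ, Real.exp (-ξ^2)) - ∫ ξ in Iic (0:ℝ), Real.exp (-ξ^2))
        - ∫ ξ in (0:ℝ)..y, Real.exp (-ξ^2)) := funext key
  rw [heq]
  rw [show -(2 / Real.sqrt π) * Real.exp (-x ^ 2) = 2 / Real.sqrt π * -Real.exp (-x ^ 2) by ring]
  exact hh

lemma continuous_erfc : Continuous erfc :=
  continuous_iff_continuousAt.2 fun x => (hasDerivAt_erfc x).continuousAt

theorem stmt3 (ρ : ℝ → ℝ) (hρ : ContDiffOn ℝ 1 ρ (Set.Ici 0)) (hρ0 : ρ 0 = 1)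
    (hb : ∃ b > (0:ℝ), ∀ u ≥ b, ρ u = 0)
    (lam t : ℝ) (hlam : 0 < lam) (ht : 0 < t) :
    IntegrableOn (fun u : ℝ =>
        ρ u * (lam * Real.exp (2*lam*u) * erfc (u / Real.sqrt t + lam * Real.sqrt t)))
      (Set.Ioi 0) ∧
    IntegrableOn (fun u : ℝ => ρ u * Real.exp (-u^2/t)) (Set.Ioi 0) ∧
    IntegrableOn (fun u : ℝ =>
        derivWithin ρ (Set.Ici 0) u *
          (Real.exp (2*lam*u) * erfc (u / Real.sqrt t + lam * Real.sqrt t)))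
      (Set.Ioi 0) ∧
    (∫ u in Set.Ioi (0:ℝ),
        ρ u * (lam * Real.exp (2*lam*u) * erfc (u / Real.sqrt t + lam * Real.sqrt t)))
      = (Real.exp (-lam^2*t) / Real.sqrt (π*t)) * (∫ u in Set.Ioi (0:ℝ), ρ u * Real.exp (-u^2/t))
        - (1/2) * erfc (lam * Real.sqrt t)
        - (1/2) * ∫ u in Set.Ioi (0:ℝ),
            derivWithin ρ (Set.Ici 0) u *
              (Real.exp (2*lam*u) * erfc (u / Real.sqrt t + lam * Real.sqrt t)) := by
  obtain ⟨b, hb0, hbz⟩ := hb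
  set s : ℝ := Real.sqrt t with hs_def
  have hs : 0 < s := Real.sqrt_pos.2 ht
  have hsq : s ^ 2 = t := Real.sq_sqrt ht.le
  set A : ℝ := Real.exp (-lam^2*t) / Real.sqrt (π*t) with hA_def
  set g : ℝ → ℝ := fun u => derivWithin ρ (Set.Ici 0) u with hg_def
  -- the three integrands
  set f1 : ℝ → ℝ := fun u => ρ u * (lam * Real.exp (2*lam*u) * erfc (u / s + lam * s))
    with hf1_def
  set f2 : ℝ → ℝ := fun u => ρ u * Real.exp (-u^2/t) with hf2_def
  set f3 : ℝ → ℝ := fun u => g u * (Real.exp (2*lam*u) * erfc (u / s + lam * s)) with hf3_def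
  -- auxiliary F and its derivative F'
  set F : ℝ → ℝ := fun u => (1/2) * (Real.exp (2*lam*u) * erfc (u / s + lam * s)) with hF_def
  set F' : ℝ → ℝ := fun u =>
      lam * Real.exp (2*lam*u) * erfc (u / s + lam * s) - A * Real.exp (-u^2/t) with hF'_def
  -- continuity facts
  have contρ : ContinuousOn ρ (Ici 0) := hρ.continuousOn
  have contg : ContinuousOn g (Ici 0) :=
    hρ.continuousOn_derivWithin (uniqueDiffOn_Ici 0) le_rfl
  have contE : Continuous fun u : ℝ => Real.exp (2*lam*u) * erfc (u / s + lam * s) := by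
    exact (Real.continuous_exp.comp (by fun_prop)).mul
      (continuous_erfc.comp (by fun_prop))
  have contF : Continuous F := continuous_const.mul contE
  have contG2 : Continuous fun u : ℝ => Real.exp (-u^2/t) :=
    Real.continuous_exp.comp (by fun_prop)
  have contF' : Continuous F' :=
    ((continuous_const.mul (Real.continuous_exp.comp (by fun_prop))).mul
      (continuous_erfc.comp (by fun_prop))).sub (continuous_const.mul contG2)
  -- derivative of F
  have hF : ∀ u : ℝ, HasDerivAt F (F' u) u := by
    intro u
    have h1 : HasDerivAt (fun u : ℝ => Real.exp (2*lam*u)) (Real.exp (2*lam*u) * (2*lam)) u := by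
      have hi : HasDerivAt (fun u : ℝ => 2*lam*u) (2*lam) u := by
        simpa using (hasDerivAt_id u).const_mul (2*lam)
      exact hi.exp
    have hi2 : HasDerivAt (fun u : ℝ => u / s + lam * s) (1/s) u := by
      simpa using ((hasDerivAt_id u).div_const s).add_const (lam * s)
    have h2 : HasDerivAt (fun u : ℝ => erfc (u / s + lam * s))
        ((-(2 / Real.sqrt π) * Real.exp (-(u/s + lam*s)^2)) * (1/s)) u :=
      (hasDerivAt_erfc (u / s + lam * s)).comp (h := fun u : ℝ => u / s + lam * s) u hi2
    have hprod := (h1.mul h2).const_mul (1/2 : ℝ)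
    have hexp : Real.exp (2*lam*u) * Real.exp (-(u/s + lam*s)^2)
        = Real.exp (-lam^2*t) * Real.exp (-u^2/t) := by
      rw [← Real.exp_add, ← Real.exp_add]
      congr 1
      have hsne : s ≠ 0 := ne_of_gt hs
      rw [← hsq]
      field_simp
      ring
    have hsqrt : Real.sqrt (π*t) = Real.sqrt π * s := by
      rw [hs_def, Real.sqrt_mul (le_of_lt Real.pi_pos)]
    have hπ : Real.sqrt π > 0 := Real.sqrt_pos.2 Real.pi_pos
    have hval : (1/2 : ℝ) * ((Real.exp (2*lam*u) * (2*lam)) * erfc (u / s + lam * s)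
          + Real.exp (2*lam*u) * ((-(2 / Real.sqrt π) * Real.exp (-(u/s + lam*s)^2)) * (1/s)))
        = F' u := by
      have step : (1/2 : ℝ) * ((Real.exp (2*lam*u) * (2*lam)) * erfc (u / s + lam * s)
          + Real.exp (2*lam*u) * ((-(2 / Real.sqrt π) * Real.exp (-(u/s + lam*s)^2)) * (1/s)))
        = lam * Real.exp (2*lam*u) * erfc (u / s + lam * s)
          - (Real.exp (2*lam*u) * Real.exp (-(u/s + lam*s)^2)) / (Real.sqrt π * s) := by
        ring
      rw [step, hexp, hF'_def, hA_def, hsqrt]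
      ring
    exact hval ▸ hprod
  -- derivative of ρ within
  have hdρ : ∀ u ∈ Ici (0:ℝ), HasDerivWithinAt ρ (g u) (Ici 0) u := fun u hu =>
    ((hρ.differentiableOn one_ne_zero) u hu).hasDerivWithinAt
  -- integration by parts on [0, b]
  set H : ℝ → ℝ := fun u => ρ u * F u with hH_def
  set h' : ℝ → ℝ := fun u => g u * F u + ρ u * F' u with hh'_def
  have hIcc : Icc (0:ℝ) b ⊆ Ici 0 := Icc_subset_Ici_self
  have hcontH : ContinuousOn H (Icc 0 b) :=
    (contρ.mono hIcc).mul contF.continuousOn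
  have hderH : ∀ u ∈ Ioo (0:ℝ) b, HasDerivAt H (h' u) u := by
    intro u hu
    have hρd : HasDerivAt ρ (g u) u :=
      (hdρ u (le_of_lt hu.1)).hasDerivAt (Ici_mem_nhds hu.1)
    exact hρd.mul (hF u)
  have hconth' : ContinuousOn h' (Icc 0 b) :=
    ((contg.mono hIcc).mul contF.continuousOn).add
      ((contρ.mono hIcc).mul contF'.continuousOn)
  have hinth' : IntervalIntegrable h' volume 0 b := by
    apply ContinuousOn.intervalIntegrable
    rwa [uIcc_of_le hb0.le]
  have ibp : ∫ u in (0:ℝ)..b, h' u = H b - H 0 :=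
    intervalIntegral.integral_eq_sub_of_hasDerivAt_of_le hb0.le hcontH hderH hinth'
  have hHb : H b = 0 := by simp [hH_def, hbz b le_rfl]
  have hH0 : H 0 = (1/2) * erfc (lam * s) := by
    simp [hH_def, hF_def, hρ0]
  -- interval integrability of f1, f2, f3
  have hif1 : IntervalIntegrable f1 volume 0 b := by
    apply ContinuousOn.intervalIntegrable
    rw [uIcc_of_le hb0.le]
    exact (contρ.mono hIcc).mul
      (((continuous_const.mul (Real.continuous_exp.comp (by fun_prop))).mul
        (continuous_erfc.comp (by fun_prop))).continuousOn)
  have hif2 : IntervalIntegrable f2 volume 0 b := by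
    apply ContinuousOn.intervalIntegrable
    rw [uIcc_of_le hb0.le]
    exact (contρ.mono hIcc).mul contG2.continuousOn
  have hif3 : IntervalIntegrable f3 volume 0 b := by
    apply ContinuousOn.intervalIntegrable
    rw [uIcc_of_le hb0.le]
    exact (contg.mono hIcc).mul contE.continuousOn
  -- rewrite the interval integral of h'
  have hsplit : ∫ u in (0:ℝ)..b, h' u
      = (1/2) * (∫ u in (0:ℝ)..b, f3 u)
        + ((∫ u in (0:ℝ)..b, f1 u) - A * ∫ u in (0:ℝ)..b, f2 u) := by
    have e1 : ∀ u, g u * F u = (1/2) * f3 u := by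
      intro u; rw [hF_def, hf3_def]; ring
    have e2 : ∀ u, ρ u * F' u = f1 u - A * f2 u := by
      intro u; rw [hF'_def, hf1_def, hf2_def]; ring
    have : ∫ u in (0:ℝ)..b, h' u
        = (∫ u in (0:ℝ)..b, (1/2) * f3 u) + ∫ u in (0:ℝ)..b, (f1 u - A * f2 u) := by
      rw [← intervalIntegral.integral_add (hif3.const_mul _) (hif1.sub (hif2.const_mul A))]
      apply intervalIntegral.integral_congr
      intro u _; simp only [hh'_def, e1 u, e2 u, Pi.add_apply]
    rw [this, intervalIntegral.integral_const_mul,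
      intervalIntegral.integral_sub hif1 (hif2.const_mul A),
      intervalIntegral.integral_const_mul]
  -- vanishing of g beyond b
  have hgz : ∀ u > b, g u = 0 := by
    intro u hu
    have hnb : Ioi b ∈ nhds u := Ioi_mem_nhds hu
    have hev : ρ =ᶠ[nhds u] (fun _ => 0) := by
      filter_upwards [hnb] with x hx
      exact hbz x (le_of_lt hx)
    have hda : HasDerivAt ρ 0 u := (hasDerivAt_const u 0).congr_of_eventuallyEq hev
    show derivWithin ρ (Set.Ici 0) u = 0
    rw [derivWithin_of_mem_nhds (Ici_mem_nhds (lt_trans hb0 hu))]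
    exact hda.deriv
  -- vanishing of f1, f2, f3 on Ioi b
  have hz1 : EqOn f1 (fun _ => (0:ℝ)) (Ioi b) := fun u hu => by
    simp [hf1_def, hbz u (le_of_lt hu)]
  have hz2 : EqOn f2 (fun _ => (0:ℝ)) (Ioi b) := fun u hu => by
    simp [hf2_def, hbz u (le_of_lt hu)]
  have hz3 : EqOn f3 (fun _ => (0:ℝ)) (Ioi b) := fun u hu => by
    simp [hf3_def, hgz u hu]
  -- integrability on Ioi 0 and reduction of the integrals
  have main : ∀ f : ℝ → ℝ, IntervalIntegrable f volume 0 b → EqOn f (fun _ => (0:ℝ)) (Ioi b) →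
      IntegrableOn f (Ioi 0) ∧ (∫ u in Ioi (0:ℝ), f u) = ∫ u in (0:ℝ)..b, f u := by
    intro f hfi hfz
    have hIoc : IntegrableOn f (Ioc 0 b) := by
      rw [intervalIntegrable_iff_integrableOn_Ioc_of_le hb0.le] at hfi
      exact hfi
    have hIoi : IntegrableOn f (Ioi b) :=
      (integrableOn_congr_fun hfz measurableSet_Ioi).2 (integrableOn_zero)
    have hunion : Ioc (0:ℝ) b ∪ Ioi b = Ioi 0 := Ioc_union_Ioi_eq_Ioi hb0.le
    constructor
    · rw [← hunion]; exact hIoc.union hIoi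
    · rw [← hunion, setIntegral_union Ioc_disjoint_Ioi_same measurableSet_Ioi hIoc hIoi]
      have : (∫ u in Ioi b, f u) = 0 := by
        rw [setIntegral_congr_fun measurableSet_Ioi hfz]; simp
      rw [this, add_zero, intervalIntegral.integral_of_le hb0.le]
  obtain ⟨hi1, he1⟩ := main f1 hif1 hz1
  obtain ⟨hi2, he2⟩ := main f2 hif2 hz2
  obtain ⟨hi3, he3⟩ := main f3 hif3 hz3
  refine ⟨hi1, hi2, hi3, ?_⟩
  show (∫ u in Ioi (0:ℝ), f1 u) = A * (∫ u in Ioi (0:ℝ), f2 u)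
      - (1/2) * erfc (lam * s) - (1/2) * ∫ u in Ioi (0:ℝ), f3 u
  rw [he1, he2, he3]
  rw [hsplit, hHb, hH0] at ibp
  linarith
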